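/- For one good with uniform distribution, c ∈ [0,1], λ ∈ [0,1], define two CDFs on ℝ: C_{γ₂}(x) = (1+λ)x for x ∈ [0,1] (0 below, 1+λ above), and C_{γ₁} given piecewise by: 0 for x < 0; cλ for 0 ≤ x < cλ/(λ+1); cλ + (λ+1)(x − cλ/(λ+1)) for cλ/(λ+1) ≤ x < (cλ+1)/(λ+1); cλ + 1 for (cλ+1)/(λ+1) ≤ x < 1; and λ+1 for x ≥ 1. Then ∫_{−∞}^{∞} |C_{γ₁}(x) − C_{γ₂}(x)| dx = (2(c−1)c + 1)λ²/(2(λ+1)). -/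

import Mathlib

open MeasureTheory Set

theorem stmt_7 (lam c : ℝ) (hlam : lam ∈ Set.Icc (0:ℝ) 1) (hc : c ∈ Set.Icc (0:ℝ) 1)
    (C₁ C₂ : ℝ → ℝ)
    (hC₂ : C₂ = fun x => if x < 0 then 0 else if x ≤ 1 then (1 + lam)*x else 1 + lam)
    (hC₁ : C₁ = fun x =>
      if x < 0 then 0
      else if x < c*lam/(lam + 1) then c*lam
      else if x < (c*lam + 1)/(lam + 1) then c*lam + (lam + 1)*(x - c*lam/(lam + 1))
      else if x < 1 then c*lam + 1
      else lam + 1) :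
    ∫ x : ℝ, |C₁ x - C₂ x| = (2*(c - 1)*c + 1)*lam^2 / (2*(lam + 1)) := by
  obtain ⟨hl0, hl1⟩ := hlam
  obtain ⟨hc0, hc1⟩ := hc
  have hl : (0:ℝ) < lam + 1 := by linarith
  have hlne : lam + 1 ≠ 0 := ne_of_gt hl
  set a : ℝ := c*lam/(lam+1) with ha_def
  set b : ℝ := (c*lam+1)/(lam+1) with hb_def
  have hcl0 : 0 ≤ c * lam := mul_nonneg hc0 hl0
  have hcll : c * lam ≤ lam := by nlinarith
  have haa : (lam+1) * a = c*lam := by rw [ha_def]; field_simp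
  have hbb : (lam+1) * b = c*lam + 1 := by rw [hb_def]; field_simp
  have h0a : 0 ≤ a := div_nonneg hcl0 (le_of_lt hl)
  have hab : a ≤ b := by
    rw [ha_def, hb_def]
    exact div_le_div_of_nonneg_right (by linarith) hl.le
  have hb1 : b ≤ 1 := by
    rw [hb_def, div_le_one hl]; linarith
  have ha1 : a ≤ 1 := le_trans hab hb1
  -- pointwise identity
  have key : ∀ x : ℝ, |C₁ x - C₂ x| =
      (Set.Ico (0:ℝ) a).indicator (fun x => c*lam - (lam+1)*x) x
      + (Set.Ico b 1).indicator (fun x => (lam+1)*x - (c*lam+1)) x := by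
    intro x
    subst hC₁ hC₂
    simp only
    by_cases h0 : x < 0
    · rw [Set.indicator_of_notMem (by simp [Set.mem_Ico]; intro h; linarith),
        Set.indicator_of_notMem (by simp [Set.mem_Ico]; intro h; linarith)]
      simp [h0]
    · push_neg at h0
      by_cases h1 : x < a
      · rw [Set.indicator_of_mem (by exact ⟨h0, h1⟩),
          Set.indicator_of_notMem (by simp [Set.mem_Ico]; intro h; linarith)]
        have hx1 : x ≤ 1 := by linarith
        rw [if_neg (not_lt.mpr h0), if_pos h1, if_neg (not_lt.mpr h0), if_pos hx1]
        have : (1+lam)*x ≤ c*lam := by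
          have := (mul_le_mul_iff_right₀ hl).mpr (le_of_lt h1)
          rw [haa] at this; linarith [this]
        rw [abs_of_nonneg (by linarith)]
        ring
      · push_neg at h1
        by_cases h2 : x < b
        · rw [Set.indicator_of_notMem (by simp [Set.mem_Ico]; intro h; linarith),
            Set.indicator_of_notMem (by simp [Set.mem_Ico]; intro h; linarith)]
          have hx1 : x ≤ 1 := by linarith
          rw [if_neg (not_lt.mpr h0), if_neg (not_lt.mpr h1), if_pos h2,
            if_neg (not_lt.mpr h0), if_pos hx1]
          have : c*lam + (lam+1)*(x - a) - (1+lam)*x = 0 := by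
            have : (lam+1)*a = c*lam := haa
            nlinarith [this]
          rw [show c*lam + (lam + 1)*(x - a) - (1 + lam)*x = 0 from this, abs_zero]
          ring
        · push_neg at h2
          by_cases h3 : x < 1
          · rw [Set.indicator_of_notMem (by simp [Set.mem_Ico]; intro h; linarith),
              Set.indicator_of_mem (by exact ⟨h2, h3⟩)]
            rw [if_neg (not_lt.mpr h0), if_neg (not_lt.mpr h1), if_neg (not_lt.mpr h2),
              if_pos h3, if_neg (not_lt.mpr h0), if_pos (le_of_lt h3)]
            have : c*lam + 1 ≤ (1+lam)*x := by
              have := (mul_le_mul_iff_right₀ hl).mpr h2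
              rw [hbb] at this; linarith [this]
            rw [abs_of_nonpos (by linarith)]
            ring
          · push_neg at h3
            rw [Set.indicator_of_notMem (by simp [Set.mem_Ico]; intro h; linarith),
              Set.indicator_of_notMem (by simp [Set.mem_Ico]; intro h; linarith)]
            rw [if_neg (not_lt.mpr h0), if_neg (not_lt.mpr (by linarith : a ≤ x)),
              if_neg (not_lt.mpr (by linarith : b ≤ x)), if_neg (not_lt.mpr h3),
              if_neg (not_lt.mpr h0)]
            by_cases h4 : x ≤ 1
            · have hx1 : x = 1 := le_antisymm h4 h3
              rw [if_pos h4, hx1, show lam + 1 - (1 + lam) * 1 = 0 by ring, abs_zero]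
              simp
            · rw [if_neg h4, show lam + 1 - (1 + lam) = 0 by ring, abs_zero]
              simp
  have int1 : Integrable ((Set.Ico (0:ℝ) a).indicator (fun x => c*lam - (lam+1)*x)) := by
    refine (IntegrableOn.integrable_indicator ?_ measurableSet_Ico)
    exact (((continuous_const.sub (continuous_const.mul continuous_id)).integrableOn_Icc).mono_set
      Set.Ico_subset_Icc_self)
  have int2 : Integrable ((Set.Ico b (1:ℝ)).indicator (fun x => (lam+1)*x - (c*lam+1))) := by
    refine (IntegrableOn.integrable_indicator ?_ measurableSet_Ico)
    exact ((((continuous_const.mul continuous_id).sub continuous_const).integrableOn_Icc).mono_set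
      Set.Ico_subset_Icc_self)
  have I1 : ∫ x in (0:ℝ)..a, (c*lam - (lam+1)*x) = c*lam*a - (lam+1)*(a^2/2) := by
    rw [intervalIntegral.integral_sub intervalIntegrable_const
        ((intervalIntegral.intervalIntegrable_id).const_mul _),
      intervalIntegral.integral_const, intervalIntegral.integral_const_mul, integral_id]
    simp [smul_eq_mul]
    ring
  have I2 : ∫ x in b..(1:ℝ), ((lam+1)*x - (c*lam+1)) =
      (lam+1)*((1^2 - b^2)/2) - (c*lam+1)*(1 - b) := by
    rw [intervalIntegral.integral_sub ((intervalIntegral.intervalIntegrable_id).const_mul _)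
        intervalIntegrable_const,
      intervalIntegral.integral_const, intervalIntegral.integral_const_mul, integral_id]
    simp [smul_eq_mul]
    ring
  calc ∫ x : ℝ, |C₁ x - C₂ x|
      = ∫ x : ℝ, ((Set.Ico (0:ℝ) a).indicator (fun x => c*lam - (lam+1)*x) x
        + (Set.Ico b 1).indicator (fun x => (lam+1)*x - (c*lam+1)) x) := by
        exact integral_congr_ae (Filter.Eventually.of_forall key)
    _ = (∫ x in Set.Ico (0:ℝ) a, (c*lam - (lam+1)*x))
        + ∫ x in Set.Ico b (1:ℝ), ((lam+1)*x - (c*lam+1)) := by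
        rw [integral_add int1 int2, integral_indicator measurableSet_Ico,
          integral_indicator measurableSet_Ico]
    _ = (∫ x in (0:ℝ)..a, (c*lam - (lam+1)*x))
        + ∫ x in b..(1:ℝ), ((lam+1)*x - (c*lam+1)) := by
        rw [setIntegral_congr_set Ico_ae_eq_Ioc, setIntegral_congr_set Ico_ae_eq_Ioc,
          intervalIntegral.integral_of_le h0a, intervalIntegral.integral_of_le hb1]
    _ = (c*lam*a - (lam+1)*(a^2/2)) + ((lam+1)*((1^2 - b^2)/2) - (c*lam+1)*(1 - b)) := by
        rw [I1, I2]
    _ = (2*(c - 1)*c + 1)*lam^2 / (2*(lam + 1)) := by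
        rw [ha_def, hb_def]
        field_simp
        ring
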